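/- For the Cauchy model with zero location, the conditional density of the label is h(x|a)(y) = f(x,y|a)/p_a(y) = y² e^x (a²+y²)/(a²+e^x y²)². If a, b ≥ ε > 0 and there exist 5 distinct real observations y₁,…,y₅ (all nonzero) such that h(x|a)(y_i) = h(x|b)(y_i) for all x ≥ 0 and all i, then a = b. -/

import Mathlib

open Real

/-- For the Cauchy scale model, the conditional densities of the labels are
`h(x|a)(y) = y²eˣ(a²+y²)/(a²+eˣy²)²`. If `a, b ≥ ε > 0` and these coincide at 5
distinct nonzero observations for all `x ≥ 0`, then `a = b`. -/
theorem cauchy_label_density_identifiable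
    (ε a b : ℝ) (hε : 0 < ε) (ha : ε ≤ a) (hb : ε ≤ b)
    (y : Fin 5 → ℝ) (hy : Function.Injective y) (hy0 : ∀ i, y i ≠ 0)
    (heq : ∀ i : Fin 5, ∀ x : ℝ, 0 ≤ x →
      (y i)^2 * Real.exp x * (a^2 + (y i)^2) / (a^2 + Real.exp x * (y i)^2)^2
        = (y i)^2 * Real.exp x * (b^2 + (y i)^2) / (b^2 + Real.exp x * (y i)^2)^2) :
    a = b := by
  have ha0 : 0 < a := lt_of_lt_of_le hε ha
  have hb0 : 0 < b := lt_of_lt_of_le hε hb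
  have hc : y 0 ≠ 0 := hy0 0
  have h := heq 0 0 le_rfl
  rw [Real.exp_zero] at h
  have h1 : a ^ 2 + (y 0) ^ 2 ≠ 0 := by positivity
  have h2 : b ^ 2 + (y 0) ^ 2 ≠ 0 := by positivity
  field_simp at h
  have hu : (0:ℝ) < (y 0) ^ 2 := by positivity
  have hA : (0:ℝ) < a ^ 2 + (y 0) ^ 2 := by positivity
  have hB : (0:ℝ) < b ^ 2 + (y 0) ^ 2 := by positivity
  have key : (y 0) ^ 2 * ((a ^ 2 + (y 0) ^ 2) * (b ^ 2 + (y 0) ^ 2)) * (b ^ 2 - a ^ 2) = 0 := by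
    linear_combination (y 0) ^ 2 * ((a ^ 2 + (y 0) ^ 2) * (b ^ 2 + (y 0) ^ 2)) * h
  have hpos : (0:ℝ) < (y 0) ^ 2 * ((a ^ 2 + (y 0) ^ 2) * (b ^ 2 + (y 0) ^ 2)) :=
    mul_pos hu (mul_pos hA hB)
  have hsq : a ^ 2 = b ^ 2 := by
    have := (mul_eq_zero.mp key).resolve_left (ne_of_gt hpos)
    linarith
  nlinarith [hsq, ha0, hb0]
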